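/- Let F be a subfield of ℝ, let f be a polynomial with coefficients in F, and let A, B, y ∈ F with A < B (regarded as real numbers). Then y < sSup { f(x) | x ∈ [A,B] } if and only if there exists δ ∈ F with δ > 0 such that the polynomial f' − δ (the derivative of f minus the constant δ, as a polynomial over F) is separable, and y < sSup { f(x) − δ·x | x ∈ [A,B] } − δ · max(|A|, |B|). -/

import Mathlib

open Polynomial

lemma bad_finite (F : Subfield ℝ) (g : Polynomial F) :
    {δ : F | ¬ (g - C δ).Separable}.Finite := by
  classical
  by_cases h : derivative g = 0
  · -- g is constant
    obtain ⟨c, rfl⟩ : ∃ c, g = C c := ⟨g.coeff 0, eq_C_of_derivative_eq_zero h⟩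
    apply Set.Finite.subset (Set.finite_singleton c)
    intro δ hδ
    simp only [Set.mem_setOf_eq, ← C_sub] at hδ
    by_contra hne
    exact hδ ((separable_C _).2 (isUnit_iff_ne_zero.2 (sub_ne_zero.2 (Ne.symm hne))))
  · set φ : F →+* ℂ := Complex.ofRealHom.comp F.subtype with hφ
    have hφinj : Function.Injective φ :=
      Complex.ofReal_injective.comp Subtype.val_injective
    set h2 : ℂ[X] := g.map φ with hh2
    have hd2 : derivative h2 ≠ 0 := by
      rw [hh2, derivative_map]
      simpa [Polynomial.map_eq_zero_iff hφinj] using h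
    have key : ∀ δ : F, ¬ (g - C δ).Separable →
        ∃ r : ℂ, (derivative h2).eval r = 0 ∧ h2.eval r = φ δ := by
      intro δ hδ
      rw [← Polynomial.separable_map φ] at hδ
      rw [Polynomial.map_sub, map_C] at hδ
      rw [Separable] at hδ
      have hder : derivative (h2 - C (φ δ)) = derivative h2 := by simp
      rw [hder] at hδ
      rw [← EuclideanDomain.gcd_isUnit_iff] at hδ
      set d := EuclideanDomain.gcd (h2 - C (φ δ)) (derivative h2) with hd
      have hd0 : d ≠ 0 := by
        intro h0
        rw [hd, EuclideanDomain.gcd_eq_zero_iff] at h0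
        exact hd2 h0.2
      obtain ⟨r, hr⟩ := Complex.exists_root (degree_pos_of_ne_zero_of_nonunit hd0 hδ)
      have h1 : (h2 - C (φ δ)).eval r = 0 :=
        eval_eq_zero_of_dvd_of_eval_eq_zero (EuclideanDomain.gcd_dvd_left _ _) hr
      have h2' : (derivative h2).eval r = 0 :=
        eval_eq_zero_of_dvd_of_eval_eq_zero (EuclideanDomain.gcd_dvd_right _ _) hr
      refine ⟨r, h2', ?_⟩
      simpa [sub_eq_zero] using h1
    have hfin : (Set.image (fun r => h2.eval r) {r : ℂ | (derivative h2).eval r = 0}).Finite := by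
      apply Set.Finite.image
      have := Polynomial.finite_setOf_isRoot hd2
      simpa [IsRoot] using this
    apply Set.Finite.subset (hfin.preimage (hφinj.injOn))
    intro δ hδ
    obtain ⟨r, hr1, hr2⟩ := key δ hδ
    exact ⟨r, hr1, hr2⟩

lemma exists_good_delta (F : Subfield ℝ) (g : Polynomial F) {ε : ℝ} (hε : 0 < ε) :
    ∃ δ : F, 0 < (δ : ℝ) ∧ (δ : ℝ) < ε ∧ (g - C δ).Separable := by
  classical
  have hT : {δ : F | 0 < (δ : ℝ) ∧ (δ : ℝ) < ε}.Infinite := by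
    obtain ⟨q, hq0, hqε⟩ := exists_rat_btwn hε
    refine Set.infinite_of_injective_forall_mem
      (f := fun n : ℕ => ((q / (n + 1) : ℚ) : F)) ?_ ?_
    · intro m n hmn
      have := congrArg (fun x : F => (x : ℝ)) hmn
      simp only [map_ratCast] at this
      have hq0' : (0:ℚ) < q := by exact_mod_cast hq0
      field_simp at this
      have h : q / (m + 1) = q / (n + 1) := Rat.cast_injective (α := F) hmn
      rw [div_eq_div_iff (by positivity) (by positivity)] at h
      exact_mod_cast (add_right_cancel (mul_left_cancel₀ hq0'.ne' h)).symm
    · intro n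
      have h1 : ((q / (n + 1) : ℚ) : ℝ) = ((q / (n+1) : ℚ) : F) := (map_ratCast F.subtype _).symm
      have hq0' : (0:ℚ) < q := by exact_mod_cast hq0
      have hpos : (0:ℚ) < q / (n+1) := by positivity
      constructor
      · rw [← h1]; exact_mod_cast hpos
      · rw [← h1]
        have : (q / (n+1) : ℚ) ≤ q := by
          rw [div_le_iff₀ (by positivity)]
          nlinarith [hq0']
        calc ((q / (n+1) : ℚ) : ℝ) ≤ q := by exact_mod_cast this
          _ < ε := hqε
  obtain ⟨δ, hδ⟩ := (hT.diff (bad_finite F g)).nonempty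
  exact ⟨δ, hδ.1.1, hδ.1.2, not_not.1 hδ.2⟩

set_option maxHeartbeats 1000000 in
/-- Lemma 1(2): for a subfield `F ⊆ ℝ`, a polynomial `f ∈ F[X]` and `A, B, y ∈ F` with
`A < B`, one has `y < sup_{x ∈ [A,B]} f(x)` iff there is an admissible `δ > 0` in `F`
(i.e. `f' - δ` is separable) with
`y < sup_{x ∈ [A,B]} (f(x) - δ·x) - δ·max(|A|,|B|)`. -/
theorem lt_sSup_iff_exists_admissible
    (F : Subfield ℝ) (f : Polynomial F) (A B y : F) (hAB : (A : ℝ) < B) :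
    (y : ℝ) < sSup {z : ℝ | ∃ x ∈ Set.Icc (A : ℝ) (B : ℝ),
        Polynomial.eval₂ F.subtype x f = z} ↔
      ∃ δ : F, 0 < δ ∧ (derivative f - C δ).Separable ∧
        (y : ℝ) < sSup {z : ℝ | ∃ x ∈ Set.Icc (A : ℝ) (B : ℝ),
            Polynomial.eval₂ F.subtype x f - (δ : ℝ) * x = z}
          - (δ : ℝ) * max |(A : ℝ)| |(B : ℝ)| := by
  set g : ℝ[X] := f.map F.subtype with hg
  have heval : ∀ x : ℝ, Polynomial.eval₂ F.subtype x f = g.eval x := by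
    intro x; rw [hg, eval_map]
  set K : ℝ := max |(A : ℝ)| |(B : ℝ)| with hK
  have hxK : ∀ x ∈ Set.Icc (A : ℝ) (B : ℝ), |x| ≤ K := fun x hx =>
    abs_le_max_abs_abs hx.1 hx.2
  have hK0 : 0 < K := by
    rcases eq_or_ne (A : ℝ) 0 with h0 | h0
    · have : (0:ℝ) < |(B:ℝ)| := abs_pos.2 (by rw [← h0]; exact ne_of_gt hAB)
      exact lt_max_of_lt_right this
    · exact lt_max_of_lt_left (abs_pos.2 h0)
  set S1 : Set ℝ := {z : ℝ | ∃ x ∈ Set.Icc (A : ℝ) (B : ℝ),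
      Polynomial.eval₂ F.subtype x f = z} with hS1
  have hS1img : S1 = (fun x => g.eval x) '' Set.Icc (A : ℝ) (B : ℝ) := by
    ext z; simp only [hS1, Set.mem_setOf_eq, Set.mem_image, heval]
  have hS2img : ∀ δ : ℝ, {z : ℝ | ∃ x ∈ Set.Icc (A : ℝ) (B : ℝ),
      Polynomial.eval₂ F.subtype x f - δ * x = z}
      = (fun x => g.eval x - δ * x) '' Set.Icc (A : ℝ) (B : ℝ) := by
    intro δ; ext z; simp only [Set.mem_setOf_eq, Set.mem_image, heval]
  have hne : (Set.Icc (A : ℝ) (B : ℝ)).Nonempty := Set.nonempty_Icc.2 hAB.le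
  have hbdd1 : BddAbove S1 := by
    rw [hS1img]
    exact (isCompact_Icc.image g.continuous).bddAbove
  have hbdd2 : ∀ δ : ℝ, BddAbove ((fun x => g.eval x - δ * x) '' Set.Icc (A : ℝ) (B : ℝ)) :=
    fun δ => (isCompact_Icc.image (g.continuous.sub (continuous_const.mul continuous_id))).bddAbove
  -- key inequalities
  have key1 : ∀ δ : ℝ, 0 < δ →
      sSup ((fun x => g.eval x - δ * x) '' Set.Icc (A : ℝ) (B : ℝ)) ≤ sSup S1 + δ * K := by
    intro δ hδ
    apply csSup_le (hne.image _)
    rintro z ⟨x, hx, rfl⟩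
    have h1 : g.eval x ≤ sSup S1 := le_csSup hbdd1 (by rw [hS1img]; exact ⟨x, hx, rfl⟩)
    have h2 := hxK x hx
    have h3 := abs_le.1 h2
    dsimp only
    nlinarith
  have key2 : ∀ δ : ℝ, 0 < δ →
      sSup S1 ≤ sSup ((fun x => g.eval x - δ * x) '' Set.Icc (A : ℝ) (B : ℝ)) + δ * K := by
    intro δ hδ
    rw [hS1img]
    apply csSup_le (hne.image _)
    rintro z ⟨x, hx, rfl⟩
    have h1 : g.eval x - δ * x ≤ sSup ((fun x => g.eval x - δ * x) '' Set.Icc (A : ℝ) (B : ℝ)) :=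
      le_csSup (hbdd2 δ) ⟨x, hx, rfl⟩
    have h2 := hxK x hx
    have h3 := abs_le.1 h2
    dsimp only
    nlinarith
  constructor
  · intro hy
    set ε : ℝ := (sSup S1 - (y : ℝ)) / (2 * K) with hε
    have hεpos : 0 < ε := div_pos (by linarith) (by linarith)
    obtain ⟨δ, hδ0, hδε, hsep⟩ := exists_good_delta F (derivative f) hεpos
    refine ⟨δ, by exact_mod_cast hδ0, hsep, ?_⟩
    rw [hS2img]
    have h2 := key2 (δ : ℝ) hδ0
    have : 2 * (δ : ℝ) * K < 2 * ε * K := by nlinarith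
    have hεK : 2 * ε * K = sSup S1 - (y : ℝ) := by
      rw [hε]; field_simp
    nlinarith
  · rintro ⟨δ, hδ0, hsep, hy⟩
    have hδ0' : (0:ℝ) < (δ : ℝ) := by exact_mod_cast hδ0
    rw [hS2img] at hy
    have h1 := key1 (δ : ℝ) hδ0'
    linarith
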